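/- For all 0 < x ≤ 2, (x - 1) - log x ≥ (x-1)²/(2(1 + 2|x-1|/3)). -/

import Mathlib

open Real Set

private lemma hasDerivAt_gA (y : ℝ) (hy : 0 < y) :
    HasDerivAt (fun z : ℝ => z - 1 - 3*(z-1)^2/(4*z+2) - Real.log z)
      (1 - (3*(2*(y-1))*(4*y+2) - 3*(y-1)^2*4)/(4*y+2)^2 - 1/y) y := by
  have hden : (4*y+2) ≠ 0 := by positivity
  have h1 : HasDerivAt (fun z : ℝ => z - 1) 1 y := (hasDerivAt_id y).sub_const 1
  have h2 : HasDerivAt (fun z : ℝ => 3*(z-1)^2) (3*(2*(y-1))) y := by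
    have := ((hasDerivAt_id y).sub_const 1).pow 2
    simpa using this.const_mul 3
  have h3 : HasDerivAt (fun z : ℝ => 4*z+2) 4 y := by
    simpa using ((hasDerivAt_id y).const_mul 4).add_const 2
  have h4 := h2.div h3 hden
  have h5 := Real.hasDerivAt_log (ne_of_gt hy)
  exact ((h1.sub h4).sub h5).congr_deriv (by simp [one_div])

private lemma lemA (x : ℝ) (hx : 1 ≤ x) :
    Real.log x ≤ x - 1 - 3*(x-1)^2/(4*x+2) := by
  set g : ℝ → ℝ := fun z => z - 1 - 3*(z-1)^2/(4*z+2) - Real.log z with hg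
  have key : MonotoneOn g (Set.Ici (1:ℝ)) := by
    apply monotoneOn_of_deriv_nonneg (convex_Ici 1)
    · intro y hy
      have hy0 : (0:ℝ) < y := lt_of_lt_of_le one_pos hy
      exact (hasDerivAt_gA y hy0).continuousAt.continuousWithinAt
    · intro y hy
      rw [interior_Ici] at hy
      have hy0 : (0:ℝ) < y := lt_trans one_pos hy
      exact (hasDerivAt_gA y hy0).differentiableAt.differentiableWithinAt
    · intro y hy
      rw [interior_Ici, Set.mem_Ioi] at hy
      have hy0 : (0:ℝ) < y := lt_trans one_pos hy
      rw [(hasDerivAt_gA y hy0).deriv]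
      have hval : 1 - (3*(2*(y-1))*(4*y+2) - 3*(y-1)^2*4)/(4*y+2)^2 - 1/y
          = 4*(y-1)^3/(y*(4*y+2)^2) := by
        field_simp
        ring
      rw [hval]
      apply div_nonneg
      · nlinarith
      · positivity
  have h0 : g 1 ≤ g x := key (by norm_num) hx hx
  have hg1 : g 1 = 0 := by simp [hg]
  rw [hg1] at h0
  simp only [hg] at h0
  linarith

private lemma lemB (x : ℝ) (hx : 0 < x) (hx1 : x ≤ 1) :
    Real.log x ≤ x - 1 - (x-1)^2/2 := by
  set h : ℝ → ℝ := fun z => z - 1 - (z-1)^2/2 - Real.log z with hh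
  have hd : ∀ y : ℝ, 0 < y → HasDerivAt h (1 - (y-1) - 1/y) y := by
    intro y hy
    have h1 : HasDerivAt (fun z : ℝ => z - 1) 1 y := (hasDerivAt_id y).sub_const 1
    have h2 : HasDerivAt (fun z : ℝ => (z-1)^2/2) (2*(y-1)/2) y := by
      have := (((hasDerivAt_id y).sub_const 1).pow 2).div_const 2
      simpa using this
    have h5 := Real.hasDerivAt_log (ne_of_gt hy)
    exact ((h1.sub h2).sub h5).congr_deriv (by ring)
  have key : AntitoneOn h (Set.Ioi (0:ℝ)) := by
    apply antitoneOn_of_deriv_nonpos (convex_Ioi 0)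
    · intro y hy
      exact (hd y hy).continuousAt.continuousWithinAt
    · intro y hy
      rw [interior_Ioi] at hy
      exact (hd y hy).differentiableAt.differentiableWithinAt
    · intro y hy
      rw [interior_Ioi, Set.mem_Ioi] at hy
      rw [(hd y hy).deriv]
      have hval : 1 - (y-1) - 1/y = -((y-1)^2/y) := by field_simp; ring
      rw [hval]
      have : (0:ℝ) ≤ (y-1)^2/y := by positivity
      linarith
  have h0 : h 1 ≤ h x := key hx (by norm_num) hx1
  have hh1 : h 1 = 0 := by simp [hh]
  rw [hh1] at h0
  simp only [hh] at h0
  linarith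

theorem log_inequality_refined (x : ℝ) (hx : 0 < x) (hx2 : x ≤ 2) :
    (x - 1) ^ 2 / (2 * (1 + 2 * |x - 1| / 3)) ≤ (x - 1) - Real.log x := by
  rcases le_or_gt 1 x with h1 | h1
  · have habs : |x - 1| = x - 1 := abs_of_nonneg (by linarith)
    have hA := lemA x h1
    have hd1 : (0:ℝ) < 2 * (1 + 2 * (x - 1) / 3) := by nlinarith
    have hd2 : (0:ℝ) < 4*x+2 := by linarith
    have heq : (x - 1) ^ 2 / (2 * (1 + 2 * (x - 1) / 3)) = 3*(x-1)^2/(4*x+2) := by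
      rw [div_eq_div_iff hd1.ne' hd2.ne']
      ring
    rw [habs, heq]
    linarith
  · have habs : |x - 1| = -(x - 1) := abs_of_nonpos (by linarith)
    have hB := lemB x hx (le_of_lt h1)
    have hden : (2:ℝ) ≤ 2 * (1 + 2 * (-(x - 1)) / 3) := by linarith
    have h2 : (x - 1) ^ 2 / (2 * (1 + 2 * (-(x - 1)) / 3)) ≤ (x-1)^2/2 :=
      div_le_div_of_nonneg_left (by positivity) (by norm_num) hden
    rw [habs]
    linarith
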